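/- Let τ be an M-topology on M : X → ℕ and let A : X → ℕ be a sub-M-set of M. Then bd(bd(bd(A))) = bd(bd(A)), i.e., bd(bd(bd(A)))(x) = bd(bd(A))(x) for every x ∈ X. -/
import Mathlib


/-- M-complement of a sub-M-set: `Aᶜ = M ⊖ A` (pointwise truncated subtraction). -/
def mcompl {X : Type*} (M A : X → ℕ) : X → ℕ := fun x => M x - A x

/-- `τ` is an M-topology on the multiset `M : X → ℕ`. -/
structure IsMTopology {X : Type*} (M : X → ℕ) (τ : Set (X → ℕ)) : Prop where
  le_of_mem : ∀ N ∈ τ, N ≤ M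
  top_mem : M ∈ τ
  zero_mem : (0 : X → ℕ) ∈ τ
  sSup_mem : ∀ S ⊆ τ, (fun x => sSup {n | ∃ N ∈ S, N x = n}) ∈ τ
  min_mem : ∀ U ∈ τ, ∀ V ∈ τ, (fun x => min (U x) (V x)) ∈ τ

/-- Interior: pointwise supremum of all open `G ∈ τ` with `G ≤ A`. -/
noncomputable def mint {X : Type*} (τ : Set (X → ℕ)) (A : X → ℕ) : X → ℕ :=
  fun x => sSup {n | ∃ G ∈ τ, G ≤ A ∧ G x = n}

/-- Closure: pointwise infimum of all closed `K` with `A ≤ K ≤ M`. -/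
noncomputable def mcl {X : Type*} (M : X → ℕ) (τ : Set (X → ℕ)) (A : X → ℕ) : X → ℕ :=
  fun x => sInf {n | ∃ K, mcompl M K ∈ τ ∧ A ≤ K ∧ K ≤ M ∧ K x = n}

/-- Exterior: interior of the M-complement. -/
noncomputable def mext {X : Type*} (M : X → ℕ) (τ : Set (X → ℕ)) (A : X → ℕ) : X → ℕ :=
  mint τ (mcompl M A)

/-- Boundary: `bd(A) = cl(A) ∩ cl(Aᶜ)` (pointwise min). -/
noncomputable def mbd {X : Type*} (M : X → ℕ) (τ : Set (X → ℕ)) (A : X → ℕ) : X → ℕ :=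
  fun x => min (mcl M τ A x) (mcl M τ (mcompl M A) x)

section Aux
variable {X : Type*} {M : X → ℕ} {τ : Set (X → ℕ)}

lemma mcompl_le (M A : X → ℕ) : mcompl M A ≤ M := fun x => Nat.sub_le _ _

lemma mcompl_M_mem (hτ : IsMTopology M τ) : mcompl M M ∈ τ := by
  have : mcompl M M = (0 : X → ℕ) := funext fun x => Nat.sub_self _
  rw [this]; exact hτ.zero_mem

lemma mcompl_mcompl {A : X → ℕ} (h : A ≤ M) : mcompl M (mcompl M A) = A :=
  funext fun x => Nat.sub_sub_self (h x)

lemma mint_bdd (A : X → ℕ) (x : X) : BddAbove {n | ∃ G ∈ τ, G ≤ A ∧ G x = n} :=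
  ⟨A x, by rintro n ⟨G, -, hGA, rfl⟩; exact hGA x⟩

lemma mint_le (hτ : IsMTopology M τ) (A : X → ℕ) : mint τ A ≤ A := fun x =>
  csSup_le ⟨0, (0 : X → ℕ), hτ.zero_mem, fun y => Nat.zero_le _, rfl⟩
    (by rintro n ⟨G, -, hGA, rfl⟩; exact hGA x)

lemma le_mint {G A : X → ℕ} (hG : G ∈ τ) (hGA : G ≤ A) : G ≤ mint τ A := fun x =>
  le_csSup (mint_bdd A x) ⟨G, hG, hGA, rfl⟩

lemma mint_mem (hτ : IsMTopology M τ) (A : X → ℕ) : mint τ A ∈ τ := by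
  have h := hτ.sSup_mem {G | G ∈ τ ∧ G ≤ A} (fun G hG => hG.1)
  have : (fun x => sSup {n | ∃ N ∈ {G | G ∈ τ ∧ G ≤ A}, N x = n}) = mint τ A := by
    funext x; congr 1; ext n; constructor
    · rintro ⟨N, ⟨h1, h2⟩, rfl⟩; exact ⟨N, h1, h2, rfl⟩
    · rintro ⟨N, h1, h2, rfl⟩; exact ⟨N, ⟨h1, h2⟩, rfl⟩
  rwa [this] at h

lemma mcl_ne {A : X → ℕ} (hτ : IsMTopology M τ) (hA : A ≤ M) (x : X) :
    (M x) ∈ {n | ∃ K, mcompl M K ∈ τ ∧ A ≤ K ∧ K ≤ M ∧ K x = n} :=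
  ⟨M, mcompl_M_mem hτ, hA, le_refl M, rfl⟩

lemma le_mcl {A : X → ℕ} (hτ : IsMTopology M τ) (hA : A ≤ M) : A ≤ mcl M τ A := fun x =>
  le_csInf ⟨M x, mcl_ne hτ hA x⟩ (by rintro n ⟨K, -, hAK, -, rfl⟩; exact hAK x)

lemma mcl_le {A K : X → ℕ} (hK : mcompl M K ∈ τ) (hAK : A ≤ K) (hKM : K ≤ M) :
    mcl M τ A ≤ K := fun x => csInf_le (OrderBot.bddBelow _) ⟨K, hK, hAK, hKM, rfl⟩

lemma mcl_le_M {A : X → ℕ} (hτ : IsMTopology M τ) (hA : A ≤ M) : mcl M τ A ≤ M :=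
  mcl_le (mcompl_M_mem hτ) hA (le_refl M)

lemma mcl_eq_of_closed {C : X → ℕ} (hτ : IsMTopology M τ) (hC : mcompl M C ∈ τ)
    (hCM : C ≤ M) : mcl M τ C = C :=
  le_antisymm (mcl_le hC (le_refl C) hCM) (le_mcl hτ hCM)

lemma mcl_closed (hτ : IsMTopology M τ) {A : X → ℕ} (hA : A ≤ M) :
    mcompl M (mcl M τ A) ∈ τ := by
  set S : Set (X → ℕ) := {G | ∃ K, mcompl M K ∈ τ ∧ A ≤ K ∧ K ≤ M ∧ G = mcompl M K} with hSdef
  have hS : S ⊆ τ := by rintro G ⟨K, hK, -, -, rfl⟩; exact hK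
  have h := hτ.sSup_mem S hS
  have heq : mcompl M (mcl M τ A) = fun x => sSup {n | ∃ N ∈ S, N x = n} := by
    funext x
    set T := {n | ∃ K, mcompl M K ∈ τ ∧ A ≤ K ∧ K ≤ M ∧ K x = n} with hT
    have hTne : T.Nonempty := ⟨M x, mcl_ne hτ hA x⟩
    obtain ⟨K₀, hK₀c, hK₀A, hK₀M, hK₀x⟩ := Nat.sInf_mem hTne
    have hUb : BddAbove {n | ∃ N ∈ S, N x = n} := by
      refine ⟨M x, ?_⟩
      rintro n ⟨N, ⟨K, -, -, -, rfl⟩, rfl⟩; exact Nat.sub_le _ _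
    have hmem : (M x - K₀ x) ∈ {n | ∃ N ∈ S, N x = n} := by
      refine ⟨mcompl M K₀, ?_, rfl⟩
      rw [hSdef]; exact ⟨K₀, hK₀c, hK₀A, hK₀M, rfl⟩
    apply le_antisymm
    · calc mcompl M (mcl M τ A) x = M x - sInf T := rfl
        _ ≤ M x - K₀ x := by rw [← hK₀x]
        _ ≤ _ := le_csSup hUb hmem
    · refine csSup_le ⟨M x - K₀ x, hmem⟩ ?_
      rintro n ⟨N, hN, rfl⟩
      rw [hSdef] at hN
      obtain ⟨K, hKc, hKA, hKM, rfl⟩ := hN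
      have hmem2 : K x ∈ T := by rw [hT]; exact ⟨K, hKc, hKA, hKM, rfl⟩
      exact Nat.sub_le_sub_left (csInf_le (OrderBot.bddBelow _) hmem2) _
  rwa [heq]

lemma max_mem (hτ : IsMTopology M τ) {U V : X → ℕ} (hU : U ∈ τ) (hV : V ∈ τ) :
    (fun x => max (U x) (V x)) ∈ τ := by
  have h := hτ.sSup_mem {U, V} (by rintro N (rfl | rfl) <;> assumption)
  have heq : (fun x => sSup {n | ∃ N ∈ ({U, V} : Set (X → ℕ)), N x = n}) =
      fun x => max (U x) (V x) := by
    funext x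
    have : {n | ∃ N ∈ ({U, V} : Set (X → ℕ)), N x = n} = {U x, V x} := by
      ext n
      simp only [Set.mem_insert_iff, Set.mem_singleton_iff, Set.mem_setOf_eq]
      constructor
      · rintro ⟨N, (rfl | rfl), rfl⟩
        · exact Or.inl rfl
        · exact Or.inr rfl
      · rintro (rfl | rfl)
        · exact ⟨U, Or.inl rfl, rfl⟩
        · exact ⟨V, Or.inr rfl, rfl⟩
    rw [this, csSup_pair]
  rwa [heq] at h

lemma mbd_closed (hτ : IsMTopology M τ) {A : X → ℕ} (hA : A ≤ M) :
    mcompl M (mbd M τ A) ∈ τ := by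
  have h1 := mcl_closed hτ hA
  have h2 := mcl_closed hτ (mcompl_le M A)
  have h := max_mem hτ h1 h2
  have heq : mcompl M (mbd M τ A) =
      fun x => max (mcompl M (mcl M τ A) x) (mcompl M (mcl M τ (mcompl M A)) x) := by
    funext x; simp only [mcompl, mbd]; omega
  rwa [heq]

lemma mbd_le_M (hτ : IsMTopology M τ) (A : X → ℕ) : mbd M τ A ≤ M := fun x =>
  le_trans (min_le_right _ _) (mcl_le_M hτ (mcompl_le M A) x)

lemma bd_bd_of_closed (hτ : IsMTopology M τ) {K : X → ℕ} (hK : mcompl M K ∈ τ)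
    (hKM : K ≤ M) : mbd M τ (mbd M τ K) = mbd M τ K := by
  set C := mbd M τ K with hCdef
  have hCM : C ≤ M := mbd_le_M hτ K
  have hCcl : mcompl M C ∈ τ := mbd_closed hτ hKM
  have hclK : mcl M τ K = K := mcl_eq_of_closed hτ hK hKM
  have hCK : C ≤ K := by
    intro x
    show min (mcl M τ K x) (mcl M τ (mcompl M K) x) ≤ K x
    rw [hclK]; exact min_le_left _ _
  have hCD : C ≤ mcl M τ (mcompl M K) := fun x => min_le_right _ _
  -- cl (compl K) ≤ compl (int K)
  have hintK : mint τ K ≤ M := le_trans (mint_le hτ K) hKM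
  have hD : mcl M τ (mcompl M K) ≤ mcompl M (mint τ K) := by
    apply mcl_le
    · rw [mcompl_mcompl hintK]; exact mint_mem hτ K
    · exact fun x => Nat.sub_le_sub_left (mint_le hτ K x) _
    · exact mcompl_le _ _
  -- C ≤ cl (compl C)
  have key : C ≤ mcl M τ (mcompl M C) := by
    intro x
    apply le_csInf ⟨M x, mcl_ne hτ (mcompl_le M C) x⟩
    rintro n ⟨L, hLc, hCL, hLM, rfl⟩
    -- G := mcompl M L is open, G ≤ C
    have hGC : mcompl M L ≤ C := fun y => by
      have h1 := hCL y; have h2 := hCM y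
      simp only [mcompl] at h1 ⊢; omega
    have hGint : mcompl M L ≤ mint τ K := le_mint hLc (le_trans hGC hCK)
    have h1 := hGint x
    have h2 : C x ≤ M x - mint τ K x := le_trans (hCD x) (hD x)
    have h3 := hintK x
    have h4 := hLM x
    simp only [mcompl] at h1 h2 ⊢
    omega
  -- conclude
  funext x
  show min (mcl M τ C x) (mcl M τ (mcompl M C) x) = C x
  rw [mcl_eq_of_closed hτ hCcl hCM]
  exact min_eq_left (key x)

end Aux

theorem bd_bd_bd_eq_bd_bd {X : Type*} (M : X → ℕ) (τ : Set (X → ℕ))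
    (hτ : IsMTopology M τ) (A : X → ℕ) (hA : A ≤ M) :
    ∀ x, mbd M τ (mbd M τ (mbd M τ A)) x = mbd M τ (mbd M τ A) x := by
  intro x
  have h := bd_bd_of_closed hτ (mbd_closed hτ hA) (mbd_le_M hτ A)
  exact congrFun h x
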